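/- Let z ∈ C \ K_∞ and let e : C → C be additive and 𝔽_q-homogeneous with e(λ) = 0 for every λ ∈ Λ_z = A + Az. Let γ = (a b; c d) be a matrix with entries in A and det γ ∈ 𝔽_q^×. Then cz + d ≠ 0; set w := (az+b)/(cz+d) and e_w(ζ) := (cz+d)^{−1}·e((cz+d)·ζ). Define s_1(z,t) := Σ_{i≥0} e(z/θ^{i+1}) t^i, s_2(z,t) := Σ_{i≥0} e(1/θ^{i+1}) t^i, s_1(w,t) := Σ_{i≥0} e_w(w/θ^{i+1}) t^i, s_2(w,t) := Σ_{i≥0} e_w(1/θ^{i+1}) t^i. Then in C[[t]]: s_1(w,t) = (cz+d)^{−1}·(ā(t)·s_1(z,t) + b̄(t)·s_2(z,t)) and s_2(w,t) = (cz+d)^{−1}·(c̄(t)·s_1(z,t) + d̄(t)·s_2(z,t)). -/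

import Mathlib

open Polynomial Finset

private lemma Esum0 {C : Type*} [Field C] (E : C → C)
    (hadd : ∀ x y : C, E (x + y) = E x + E y) : E 0 = 0 := by
  have h := hadd 0 0
  rw [add_zero] at h
  exact (left_eq_add.mp h)

private lemma Esum {C : Type*} [Field C] (E : C → C)
    (hadd : ∀ x y : C, E (x + y) = E x + E y)
    {ι : Type*} (s : Finset ι) (f : ι → C) :
    E (∑ j ∈ s, f j) = ∑ j ∈ s, E (f j) := by
  classical
  induction s using Finset.induction_on with
  | empty => simpa using Esum0 E hadd
  | insert a s hx ih => rw [Finset.sum_insert hx, Finset.sum_insert hx, hadd, ih]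

private lemma key_agf {C : Type*} [Field C]
    (q : ℕ) (hq0 : q ≠ 0)
    (E : C → C)
    (hadd : ∀ x y : C, E (x + y) = E x + E y)
    (hhom : ∀ lam x : C, lam ^ q = lam → E (lam * x) = lam * E x)
    (θ ζ : C) (hθ0 : θ ≠ 0)
    (hvanish : ∀ b : Polynomial C, (∀ n : ℕ, b.coeff n ^ q = b.coeff n) →
      E (b.eval θ * ζ) = 0)
    (a : Polynomial C) (ha : ∀ n : ℕ, a.coeff n ^ q = a.coeff n) (i : ℕ) :
    E (a.eval θ * ζ / θ ^ (i + 1))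
      = ∑ j ∈ range (i + 1), a.coeff j * E (ζ / θ ^ (i + 1 - j)) := by
  set N := max (a.natDegree + 1) (i + 1) with hN
  have hdeg : a.natDegree < N := lt_of_lt_of_le (Nat.lt_succ_self _) (le_max_left _ _)
  rw [Polynomial.eval_eq_sum_range' hdeg, Finset.sum_mul, Finset.sum_div, Esum E hadd]
  have hterm : ∀ j, E (a.coeff j * θ ^ j * ζ / θ ^ (i + 1))
      = if j < i + 1 then a.coeff j * E (ζ / θ ^ (i + 1 - j)) else 0 := by
    intro j
    have h1 : a.coeff j * θ ^ j * ζ / θ ^ (i + 1)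
        = a.coeff j * (θ ^ j * ζ / θ ^ (i + 1)) := by ring
    rw [h1, hhom _ _ (ha j)]
    by_cases hj : j < i + 1
    · rw [if_pos hj]
      have h3 : θ ^ (i + 1) = θ ^ (i + 1 - j) * θ ^ j := by
        rw [← pow_add]; congr 1; omega
      rw [h3, mul_comm (θ ^ j) ζ, mul_div_mul_right _ _ (pow_ne_zero j hθ0)]
    · rw [if_neg hj]
      have h2 : θ ^ j * ζ / θ ^ (i + 1) = (X ^ (j - (i + 1)) : Polynomial C).eval θ * ζ := by
        rw [eval_pow, eval_X]
        rw [div_eq_iff (pow_ne_zero _ hθ0),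
          show θ ^ (j - (i + 1)) * ζ * θ ^ (i + 1)
            = θ ^ (j - (i + 1)) * θ ^ (i + 1) * ζ by ring, ← pow_add,
          show j - (i + 1) + (i + 1) = j by omega, mul_comm]
      rw [h2, hvanish _ (by
        intro n
        rw [Polynomial.coeff_X_pow]
        split
        · exact one_pow q
        · exact zero_pow hq0), mul_zero]
  calc ∑ j ∈ range N, E (a.coeff j * θ ^ j * ζ / θ ^ (i + 1))
      = ∑ j ∈ range N, (if j < i + 1 then a.coeff j * E (ζ / θ ^ (i + 1 - j)) else 0) :=
        Finset.sum_congr rfl (fun j _ => hterm j)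
    _ = ∑ j ∈ range (i + 1), (if j < i + 1 then a.coeff j * E (ζ / θ ^ (i + 1 - j)) else 0) := by
        refine (Finset.sum_subset (Finset.range_subset_range.mpr (le_max_right _ _)) ?_).symm
        intro x _ hx
        rw [if_neg (by simpa using hx)]
    _ = ∑ j ∈ range (i + 1), a.coeff j * E (ζ / θ ^ (i + 1 - j)) := by
        refine Finset.sum_congr rfl fun j hj => ?_
        rw [if_pos (Finset.mem_range.mp hj)]

private lemma evalmem {C : Type*} [Field C] (Kinf : Subfield C) (θ : C) (hθK : θ ∈ Kinf)
    (a : Polynomial C) (ha : ∀ n : ℕ, a.coeff n ∈ Kinf) : a.eval θ ∈ Kinf := by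
  rw [Polynomial.eval_eq_sum_range]
  exact sum_mem (fun j _ => Subfield.mul_mem _ (ha j) (pow_mem hθK j))



/-- Transformation of the Anderson generating functions `s_1`, `s_2` under a matrix
`γ = (a b; c d)` with entries in `A = 𝔽_q[θ]` and determinant in `𝔽_q^×` (with `𝔽_q`
identified with `{c : C | c^q = c}`): writing `w = (az+b)/(cz+d)` and
`e_w(ζ) = (cz+d)⁻¹ E((cz+d)ζ)`, one has `cz+d ≠ 0`,
`s_1(w,t) = (cz+d)⁻¹ (ā(t) s_1(z,t) + b̄(t) s_2(z,t))` and
`s_2(w,t) = (cz+d)⁻¹ (c̄(t) s_1(z,t) + d̄(t) s_2(z,t))` in `C[[t]]`. -/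
theorem s1_s2_transformation
    {C : Type*} [NormedField C] [CompleteSpace C] [IsAlgClosed C] [IsUltrametricDist C]
    (p e : ℕ) (hp : p.Prime) (he : 0 < e) [CharP C p]
    (q : ℕ) (hq : q = p ^ e)
    (θ : C) (hθ : ‖θ‖ = (q : ℝ))
    (Kinf : Subfield C) (hθK : θ ∈ Kinf) (hFqK : ∀ c : C, c ^ q = c → c ∈ Kinf)
    (z : C) (hz : z ∉ Kinf)
    (E : C → C)
    (hadd : ∀ x y : C, E (x + y) = E x + E y)
    (hhom : ∀ lam x : C, lam ^ q = lam → E (lam * x) = lam * E x)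
    (hlat : ∀ a b : Polynomial C, (∀ n : ℕ, a.coeff n ^ q = a.coeff n) →
      (∀ n : ℕ, b.coeff n ^ q = b.coeff n) → E (a.eval θ + b.eval θ * z) = 0)
    (a b c d : Polynomial C)
    (ha : ∀ n : ℕ, a.coeff n ^ q = a.coeff n)
    (hb : ∀ n : ℕ, b.coeff n ^ q = b.coeff n)
    (hc : ∀ n : ℕ, c.coeff n ^ q = c.coeff n)
    (hd : ∀ n : ℕ, d.coeff n ^ q = d.coeff n)
    (u : C) (hu : u ^ q = u) (hu0 : u ≠ 0)
    (hdet : a * d - b * c = Polynomial.C u) :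
    c.eval θ * z + d.eval θ ≠ 0 ∧
    (PowerSeries.mk fun i =>
        (c.eval θ * z + d.eval θ)⁻¹ *
          E ((c.eval θ * z + d.eval θ) *
            ((a.eval θ * z + b.eval θ) / (c.eval θ * z + d.eval θ) / θ ^ (i + 1))))
      = PowerSeries.C (c.eval θ * z + d.eval θ)⁻¹ *
          ((a : PowerSeries C) * (PowerSeries.mk fun i => E (z / θ ^ (i + 1)))
            + (b : PowerSeries C) * PowerSeries.mk fun i => E (1 / θ ^ (i + 1))) ∧
    (PowerSeries.mk fun i =>
        (c.eval θ * z + d.eval θ)⁻¹ *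
          E ((c.eval θ * z + d.eval θ) * (1 / θ ^ (i + 1))))
      = PowerSeries.C (c.eval θ * z + d.eval θ)⁻¹ *
          ((c : PowerSeries C) * (PowerSeries.mk fun i => E (z / θ ^ (i + 1)))
            + (d : PowerSeries C) * PowerSeries.mk fun i => E (1 / θ ^ (i + 1))) := by
  have hq0 : q ≠ 0 := by
    rw [hq]; exact pow_ne_zero _ hp.pos.ne'
  have hqR : (q : ℝ) ≠ 0 := Nat.cast_ne_zero.mpr hq0
  have hθ0 : θ ≠ 0 := by
    intro h
    rw [h, norm_zero] at hθ
    exact hqR hθ.symm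
  have h0 : c.eval θ * z + d.eval θ ≠ 0 := by
    intro h
    by_cases hc0 : c.eval θ = 0
    · have hd0 : d.eval θ = 0 := by rwa [hc0, zero_mul, zero_add] at h
      have hde := congrArg (Polynomial.eval θ) hdet
      simp [hc0, hd0] at hde
      exact hu0 hde.symm
    · have hzval : z = -(d.eval θ) / c.eval θ := by
        rw [eq_div_iff hc0]
        linear_combination h
      apply hz
      rw [hzval]
      exact Subfield.div_mem _ (neg_mem (evalmem Kinf θ hθK d fun n => hFqK _ (hd n)))
        (evalmem Kinf θ hθK c fun n => hFqK _ (hc n))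
  have hvz : ∀ b : Polynomial C, (∀ n : ℕ, b.coeff n ^ q = b.coeff n) →
      E (b.eval θ * z) = 0 := by
    intro b' hb'
    have := hlat 0 b' (fun n => by simp [zero_pow hq0]) hb'
    simpa using this
  have hv1 : ∀ b : Polynomial C, (∀ n : ℕ, b.coeff n ^ q = b.coeff n) →
      E (b.eval θ * 1) = 0 := by
    intro b' hb'
    have := hlat b' 0 hb' (fun n => by simp [zero_pow hq0])
    simpa [mul_one] using this
  refine ⟨h0, ?_, ?_⟩
  · ext n
    rw [PowerSeries.coeff_mk, PowerSeries.coeff_C_mul, map_add,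
      PowerSeries.coeff_mul, PowerSeries.coeff_mul]
    simp only [Polynomial.coeff_coe, PowerSeries.coeff_mk]
    rw [Finset.Nat.sum_antidiagonal_eq_sum_range_succ_mk,
      Finset.Nat.sum_antidiagonal_eq_sum_range_succ_mk]
    have hin : (Polynomial.eval θ c * z + Polynomial.eval θ d) *
        ((Polynomial.eval θ a * z + Polynomial.eval θ b) /
          (Polynomial.eval θ c * z + Polynomial.eval θ d) / θ ^ (n + 1))
        = Polynomial.eval θ a * z / θ ^ (n + 1) + Polynomial.eval θ b * 1 / θ ^ (n + 1) := by
      field_simp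
    rw [hin, hadd,
      key_agf q hq0 E hadd hhom θ z hθ0 hvz a ha n,
      key_agf q hq0 E hadd hhom θ 1 hθ0 hv1 b hb n]
    congr 1
    congr 1
    · refine Finset.sum_congr rfl fun j hj => ?_
      rw [show n + 1 - j = n - j + 1 by
        have := Finset.mem_range.mp hj; omega]
    · refine Finset.sum_congr rfl fun j hj => ?_
      rw [show n + 1 - j = n - j + 1 by
        have := Finset.mem_range.mp hj; omega]
  · ext n
    rw [PowerSeries.coeff_mk, PowerSeries.coeff_C_mul, map_add,
      PowerSeries.coeff_mul, PowerSeries.coeff_mul]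
    simp only [Polynomial.coeff_coe, PowerSeries.coeff_mk]
    rw [Finset.Nat.sum_antidiagonal_eq_sum_range_succ_mk,
      Finset.Nat.sum_antidiagonal_eq_sum_range_succ_mk]
    have hin : (Polynomial.eval θ c * z + Polynomial.eval θ d) * (1 / θ ^ (n + 1))
        = Polynomial.eval θ c * z / θ ^ (n + 1) + Polynomial.eval θ d * 1 / θ ^ (n + 1) := by
      field_simp
    rw [hin, hadd,
      key_agf q hq0 E hadd hhom θ z hθ0 hvz c hc n,
      key_agf q hq0 E hadd hhom θ 1 hθ0 hv1 d hd n]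
    congr 1
    congr 1
    · refine Finset.sum_congr rfl fun j hj => ?_
      rw [show n + 1 - j = n - j + 1 by
        have := Finset.mem_range.mp hj; omega]
    · refine Finset.sum_congr rfl fun j hj => ?_
      rw [show n + 1 - j = n - j + 1 by
        have := Finset.mem_range.mp hj; omega]
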